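/- A matrix A with B(H) entries is a left Schur multiplier on B(ℓ²(H)) if and only if A * B ∈ 𝒞(ℓ²(H)) for every B ∈ 𝒞(ℓ²(H)); moreover the multiplier norm of A as a map on B(ℓ²(H)) equals its norm as a multiplier from 𝒞(ℓ²(H)) to 𝒞(ℓ²(H)). The analogous statement holds for right Schur multipliers. -/

import Mathlib

noncomputable section

/-- The Hilbert space `ℓ²(H)` of square-summable `H`-valued sequences. -/
abbrev ellTwo (H : Type) [NormedAddCommGroup H] [InnerProductSpace ℂ H] : Type :=
  lp (fun _ : ℕ => H) 2

variable {H : Type} [NormedAddCommGroup H] [InnerProductSpace ℂ H] [CompleteSpace H]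
  [TopologicalSpace.SeparableSpace H]

/-- A bounded operator `A` on `ℓ²(H)` is represented by the matrix `T = (T_{kj})`
(with `T k j ∈ B(H)`) if `(A (x e_j))_k = T_{kj} x` for all `j, k, x`. -/
def Represents (T : ℕ → ℕ → (H →L[ℂ] H))
    (A : ellTwo H →L[ℂ] ellTwo H) : Prop :=
  ∀ (j : ℕ) (x : H) (k : ℕ), A (lp.single 2 j x) k = T k j x

/-- A "polynomial" matrix: finitely many nonzero diagonals and uniformly bounded entries. -/
def PolyMat (T : ℕ → ℕ → (H →L[ℂ] H)) : Prop :=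
  (∃ N : ℕ, ∀ k j : ℕ, (N : ℤ) < |(j : ℤ) - (k : ℤ)| → T k j = 0) ∧
  (∃ M : ℝ, ∀ k j : ℕ, ‖T k j‖ ≤ M)

/-- The class `𝒞(ℓ²(H))`: the closure in `B(ℓ²(H))` of the operators represented by
polynomial matrices. -/
def ContinuousClass (A : ellTwo H →L[ℂ] ellTwo H) : Prop :=
  A ∈ closure {B : ellTwo H →L[ℂ] ellTwo H | ∃ T, PolyMat T ∧ Represents T B}

/-- `C` is a bound for `T` as a right Schur multiplier: for every bounded `B = (S_{kj})`,
the Schur product `B * A = (S_{kj} ∘ T_{kj})` is bounded with norm at most `C ‖B‖`. -/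
def IsRightMultBound (T : ℕ → ℕ → (H →L[ℂ] H)) (C : ℝ) : Prop :=
  ∀ (S : ℕ → ℕ → (H →L[ℂ] H)) (B : ellTwo H →L[ℂ] ellTwo H), Represents S B →
    ∃ AB : ellTwo H →L[ℂ] ellTwo H,
      Represents (fun k j => (S k j).comp (T k j)) AB ∧ ‖AB‖ ≤ C * ‖B‖

/-- `C` is a bound for `T` as a left Schur multiplier: for every bounded `B = (S_{kj})`,
the Schur product `A * B = (T_{kj} ∘ S_{kj})` is bounded with norm at most `C ‖B‖`. -/
def IsLeftMultBound (T : ℕ → ℕ → (H →L[ℂ] H)) (C : ℝ) : Prop :=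
  ∀ (S : ℕ → ℕ → (H →L[ℂ] H)) (B : ellTwo H →L[ℂ] ellTwo H), Represents S B →
    ∃ AB : ellTwo H →L[ℂ] ellTwo H,
      Represents (fun k j => (T k j).comp (S k j)) AB ∧ ‖AB‖ ≤ C * ‖B‖

/-- The right Schur-multiplier norm `‖T‖_{M_r(ℓ²(H))}`. -/
def rightMultNorm (T : ℕ → ℕ → (H →L[ℂ] H)) : ℝ :=
  sInf {C : ℝ | 0 ≤ C ∧ IsRightMultBound T C}

/-- The left Schur-multiplier norm `‖T‖_{M_l(ℓ²(H))}`. -/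
def leftMultNorm (T : ℕ → ℕ → (H →L[ℂ] H)) : ℝ :=
  sInf {C : ℝ | 0 ≤ C ∧ IsLeftMultBound T C}

/-- `C` is a bound for `T` as a left Schur multiplier from `𝒞(ℓ²(H))` to `𝒞(ℓ²(H))`. -/
def IsLeftCCBound (T : ℕ → ℕ → (H →L[ℂ] H)) (C : ℝ) : Prop :=
  ∀ (S : ℕ → ℕ → (H →L[ℂ] H)) (B : ellTwo H →L[ℂ] ellTwo H), Represents S B →
    ContinuousClass B →
    ∃ AB : ellTwo H →L[ℂ] ellTwo H,
      Represents (fun k j => (T k j).comp (S k j)) AB ∧ ContinuousClass AB ∧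
      ‖AB‖ ≤ C * ‖B‖

/-- `C` is a bound for `T` as a right Schur multiplier from `𝒞(ℓ²(H))` to `𝒞(ℓ²(H))`. -/
def IsRightCCBound (T : ℕ → ℕ → (H →L[ℂ] H)) (C : ℝ) : Prop :=
  ∀ (S : ℕ → ℕ → (H →L[ℂ] H)) (B : ellTwo H →L[ℂ] ellTwo H), Represents S B →
    ContinuousClass B →
    ∃ AB : ellTwo H →L[ℂ] ellTwo H,
      Represents (fun k j => (S k j).comp (T k j)) AB ∧ ContinuousClass AB ∧
      ‖AB‖ ≤ C * ‖B‖

set_option linter.unusedSectionVars false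
namespace SchurAux

lemma hp2 : (0:ℝ) < (2:ENNReal).toReal := by norm_num

lemma single_add (j : ℕ) (x y : H) :
    lp.single 2 j (x + y) = (lp.single 2 j x : ellTwo H) + lp.single 2 j y := by
  apply lp.ext; funext i
  by_cases h : i = j
  · subst h; simp [lp.single_apply_self, lp.coeFn_add]
  · simp [lp.single_apply_ne _ _ _ h, lp.coeFn_add]

lemma norm_single (j : ℕ) (x : H) : ‖(lp.single 2 j x : ellTwo H)‖ = ‖x‖ :=
  lp.norm_single (E := fun _ : ℕ => H) (p := 2) (by norm_num) j x

/-- The matrix of an operator. -/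
def mat (A : ellTwo H →L[ℂ] ellTwo H) (k j : ℕ) : H →L[ℂ] H :=
  LinearMap.mkContinuous
    { toFun := fun x => A (lp.single 2 j x) k
      map_add' := fun x y => by show (A _) k = (A _) k + (A _) k; rw [single_add, map_add, lp.coeFn_add]; rfl
      map_smul' := fun c x => by
        show (A _) k = c • (A _) k
        rw [lp.single_smul, map_smul, lp.coeFn_smul]; rfl }
    ‖A‖ (fun x => by
      calc ‖A (lp.single 2 j x) k‖ ≤ ‖A (lp.single 2 j x)‖ :=
            lp.norm_apply_le_norm two_ne_zero _ k
        _ ≤ ‖A‖ * ‖(lp.single 2 j x : ellTwo H)‖ := A.le_opNorm _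
        _ = ‖A‖ * ‖x‖ := by rw [norm_single])

lemma represents_mat (A : ellTwo H →L[ℂ] ellTwo H) : Represents (mat A) A :=
  fun _ _ _ => rfl

lemma norm_mat_le (A : ellTwo H →L[ℂ] ellTwo H) (k j : ℕ) : ‖mat A k j‖ ≤ ‖A‖ :=
  LinearMap.mkContinuous_norm_le _ (norm_nonneg A) _

lemma represents_eq_mat {S : ℕ → ℕ → (H →L[ℂ] H)} {A : ellTwo H →L[ℂ] ellTwo H}
    (h : Represents S A) : S = mat A := by
  funext k j; ext x; exact (h j x k).symm

lemma norm_entry_le {S : ℕ → ℕ → (H →L[ℂ] H)} {A : ellTwo H →L[ℂ] ellTwo H}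
    (h : Represents S A) (k j : ℕ) : ‖S k j‖ ≤ ‖A‖ := by
  rw [represents_eq_mat h]; exact norm_mat_le A k j

lemma represents_unique {S : ℕ → ℕ → (H →L[ℂ] H)} {A A' : ellTwo H →L[ℂ] ellTwo H}
    (h : Represents S A) (h' : Represents S A') : A = A' := by
  refine ContinuousLinearMap.ext fun f => ?_
  have hf : HasSum (fun i : ℕ => (lp.single 2 i (f i) : ellTwo H)) f :=
    lp.hasSum_single (by norm_num) f
  have h1 : HasSum (fun i : ℕ => A (lp.single 2 i (f i))) (A f) := A.hasSum hf
  have h2 : HasSum (fun i : ℕ => A (lp.single 2 i (f i))) (A' f) := by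
    have : (fun i : ℕ => A (lp.single 2 i (f i)))
        = fun i : ℕ => A' (lp.single 2 i (f i)) := by
      funext i; apply lp.ext; funext k
      rw [h i (f i) k, h' i (f i) k]
    rw [this]; exact A'.hasSum hf
  exact h1.unique h2

lemma represents_sub {S S' : ℕ → ℕ → (H →L[ℂ] H)} {A A' : ellTwo H →L[ℂ] ellTwo H}
    (h : Represents S A) (h' : Represents S' A') :
    Represents (fun k j => S k j - S' k j) (A - A') := by
  intro j x k
  have : ((A - A') (lp.single 2 j x)) = A (lp.single 2 j x) - A' (lp.single 2 j x) := by
    simp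
  rw [this, lp.coeFn_sub, Pi.sub_apply, h j x k, h' j x k]; rfl

end SchurAux

namespace SchurAux

lemma sum_sq_le (g : ellTwo H) (F : Finset ℕ) :
    ∑ k ∈ F, ‖g k‖ ^ (2:ENNReal).toReal ≤ ‖g‖ ^ (2:ENNReal).toReal :=
  sum_le_hasSum F (fun _ _ => Real.rpow_nonneg (norm_nonneg _) _) (lp.hasSum_norm hp2 g)

lemma memℓp_of_bound (f : ∀ _ : ℕ, H) (c : ℝ)
    (h : ∀ F : Finset ℕ, ∑ k ∈ F, ‖f k‖ ^ (2:ENNReal).toReal ≤ c) :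
    Memℓp f 2 :=
  memℓp_gen' h

lemma norm_le_of_bound (g : ellTwo H) (c : ℝ) (hc : 0 ≤ c)
    (h : ∀ F : Finset ℕ, ∑ k ∈ F, ‖g k‖ ^ (2:ENNReal).toReal ≤ c ^ (2:ENNReal).toReal) :
    ‖g‖ ≤ c := by
  have : ‖g‖ ^ (2:ENNReal).toReal ≤ c ^ (2:ENNReal).toReal :=
    hasSum_le_of_sum_le (lp.hasSum_norm hp2 g) h
  by_contra hlt
  push_neg at hlt
  exact absurd this (not_le.2 (Real.rpow_lt_rpow hc hlt hp2))

/-- The submodule of finitely supported sequences. -/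
def fin : Submodule ℂ (ellTwo H) where
  carrier := {f | ∃ s : Finset ℕ, ∀ k ∉ s, f k = 0}
  add_mem' := by
    rintro f g ⟨s, hs⟩ ⟨t, ht⟩
    exact ⟨s ∪ t, fun k hk => by
      rw [lp.coeFn_add, Pi.add_apply, hs k (fun h => hk (Finset.mem_union_left _ h)),
        ht k (fun h => hk (Finset.mem_union_right _ h)), add_zero]⟩
  zero_mem' := ⟨∅, fun k _ => rfl⟩
  smul_mem' := by
    rintro c f ⟨s, hs⟩
    exact ⟨s, fun k hk => by rw [lp.coeFn_smul, Pi.smul_apply, hs k hk, smul_zero]⟩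

lemma single_mem_fin (j : ℕ) (x : H) :
    (lp.single 2 j x : ellTwo H) ∈ (fin : Submodule ℂ (ellTwo H)) :=
  ⟨{j}, fun k hk => lp.single_apply_ne (E := fun _ : ℕ => H) 2 j x (by simpa using hk)⟩

lemma dense_fin : Dense ((fin : Submodule ℂ (ellTwo H)) : Set (ellTwo H)) := by
  intro f
  have hf : HasSum (fun i : ℕ => (lp.single 2 i (f i) : ellTwo H)) f :=
    lp.hasSum_single (by norm_num) f
  refine mem_closure_of_tendsto hf (Filter.Eventually.of_forall fun s => ?_)
  exact Submodule.sum_mem _ fun i _ => single_mem_fin i (f i)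

lemma denseRange_subtypeL :
    DenseRange ((fin : Submodule ℂ (ellTwo H)).subtypeL) := by
  have h : Set.range ((fin : Submodule ℂ (ellTwo H)).subtypeL) =
      ((fin : Submodule ℂ (ellTwo H)) : Set (ellTwo H)) := Subtype.range_coe
  rw [DenseRange, h]
  exact dense_fin

lemma fin_sum_single {f : ellTwo H} {s : Finset ℕ} (hs : ∀ k ∉ s, f k = 0) :
    f = ∑ j ∈ s, (lp.single 2 j (f j) : ellTwo H) := by
  apply lp.ext; funext i
  rw [lp.coeFn_sum, Finset.sum_apply]
  by_cases hi : i ∈ s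
  · have h0 : ∀ j ∈ s, j ≠ i → (lp.single 2 j (f j) : ellTwo H) i = 0 :=
      fun j _ hj => lp.single_apply_ne (E := fun _ : ℕ => H) 2 j (f j) hj.symm
    rw [Finset.sum_eq_single_of_mem i hi h0]
    exact (lp.single_apply_self (E := fun _ : ℕ => H) 2 i (f i)).symm
  · rw [hs i hi, Finset.sum_eq_zero]
    intro j hj
    exact lp.single_apply_ne (E := fun _ : ℕ => H) 2 j (f j) (fun h => hi (by rw [h]; exact hj))

lemma trunc_bound (m : ℕ) (f : ellTwo H) (F : Finset ℕ) :
    ∑ k ∈ F, ‖if k < m then f k else 0‖ ^ (2:ENNReal).toReal ≤ ‖f‖ ^ (2:ENNReal).toReal := by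
  refine le_trans (Finset.sum_le_sum fun k _ => ?_) (sum_sq_le f F)
  by_cases h : k < m
  · simp [h]
  · simp only [h, if_false, norm_zero]
    rw [Real.zero_rpow (by norm_num : (2:ENNReal).toReal ≠ 0)]
    exact Real.rpow_nonneg (norm_nonneg _) _

/-- Coordinate truncation. -/
def projFun (m : ℕ) (f : ellTwo H) : ellTwo H :=
  ⟨fun k => if k < m then f k else 0,
    memℓp_of_bound _ (‖f‖ ^ (2:ENNReal).toReal) (trunc_bound m f)⟩

lemma projFun_apply (m : ℕ) (f : ellTwo H) (k : ℕ) :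
    (projFun m f) k = if k < m then f k else 0 := rfl

/-- Coordinate truncation operator. -/
def proj (m : ℕ) : ellTwo H →L[ℂ] ellTwo H :=
  LinearMap.mkContinuous
    { toFun := projFun m
      map_add' := fun f g => by
        apply lp.ext; funext k
        simp only [projFun_apply, lp.coeFn_add, Pi.add_apply]
        by_cases h : k < m <;> simp [h, projFun_apply]
      map_smul' := fun c f => by
        apply lp.ext; funext k
        simp only [projFun_apply, lp.coeFn_smul, Pi.smul_apply, RingHom.id_apply]
        by_cases h : k < m <;> simp [h, projFun_apply] }
    1 (fun f => by
      rw [one_mul]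
      exact norm_le_of_bound _ _ (norm_nonneg f) (trunc_bound m f))

lemma proj_apply (m : ℕ) (f : ellTwo H) (k : ℕ) :
    (proj m f) k = if k < m then f k else 0 := rfl

lemma norm_proj_le (m : ℕ) (f : ellTwo H) : ‖proj m f‖ ≤ ‖f‖ := by
  refine norm_le_of_bound _ _ (norm_nonneg f) (fun F => ?_)
  simpa only [proj_apply] using trunc_bound m f F

lemma proj_single (m j : ℕ) (x : H) :
    proj m (lp.single 2 j x : ellTwo H) =
      if j < m then (lp.single 2 j x : ellTwo H) else 0 := by
  apply lp.ext; funext k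
  rw [proj_apply]
  by_cases hj : j < m
  · rw [if_pos hj]
    by_cases hk : k < m
    · rw [if_pos hk]
    · rw [if_neg hk]
      exact (lp.single_apply_ne (E := fun _ : ℕ => H) 2 j x (by omega : k ≠ j)).symm
  · rw [if_neg hj]
    by_cases hk : k < m
    · rw [if_pos hk]
      rw [lp.single_apply_ne (E := fun _ : ℕ => H) 2 j x (by omega : k ≠ j)]
      rfl
    · rw [if_neg hk]; rfl

end SchurAux

namespace SchurAux

variable (mul : ℕ → ℕ → (H →L[ℂ] H) → (H →L[ℂ] H))

def GB (C : ℝ) : Prop :=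
  ∀ (S : ℕ → ℕ → (H →L[ℂ] H)) (B : ellTwo H →L[ℂ] ellTwo H), Represents S B →
    ∃ AB : ellTwo H →L[ℂ] ellTwo H,
      Represents (fun k j => mul k j (S k j)) AB ∧ ‖AB‖ ≤ C * ‖B‖

def GCC (C : ℝ) : Prop :=
  ∀ (S : ℕ → ℕ → (H →L[ℂ] H)) (B : ellTwo H →L[ℂ] ellTwo H), Represents S B →
    ContinuousClass B →
    ∃ AB : ellTwo H →L[ℂ] ellTwo H,
      Represents (fun k j => mul k j (S k j)) AB ∧ ContinuousClass AB ∧ ‖AB‖ ≤ C * ‖B‖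

variable {mul}

lemma gb_to_gcc {C : ℝ} (hC : 0 ≤ C)
    (hsub : ∀ k j a b, mul k j (a - b) = mul k j a - mul k j b)
    (h : GB mul C) : GCC mul C := by
  intro S B hSB hBcc
  obtain ⟨AB, hABrep, hABn⟩ := h S B hSB
  refine ⟨AB, hABrep, ?_, hABn⟩
  rw [ContinuousClass, Metric.mem_closure_iff]
  intro ε hε
  rw [ContinuousClass, Metric.mem_closure_iff] at hBcc
  obtain ⟨B', hB'mem, hB'close⟩ := hBcc (ε / (C + 1)) (by positivity)
  obtain ⟨T', hT'poly, hT'rep⟩ := hB'mem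
  obtain ⟨AB', hAB'rep, _⟩ := h T' B' hT'rep
  -- AB - AB' represents mul (S - T'), and so does the operator from h on (S-T', B-B');
  obtain ⟨D₀, hD₀rep, hD₀n⟩ := h (fun k j => S k j - T' k j) (B - B') (represents_sub hSB hT'rep)
  have hrepdiff : Represents (fun k j => mul k j (S k j - T' k j)) (AB - AB') := by
    have h2 := represents_sub hABrep hAB'rep
    have he : (fun k j => mul k j (S k j - T' k j))
        = fun k j => mul k j (S k j) - mul k j (T' k j) := by
      funext k j; exact hsub k j _ _
    rw [he]; exact h2
  have hD : D₀ = AB - AB' := represents_unique hD₀rep hrepdiff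
  refine ⟨AB', ⟨(fun k j => mul k j (T' k j)), ⟨?_, ?_⟩, hAB'rep⟩, ?_⟩
  · -- banded
    obtain ⟨N, hN⟩ := hT'poly.1
    refine ⟨N, fun k j hkj => ?_⟩
    have h0 : T' k j = 0 := hN k j hkj
    have hz : mul k j 0 = 0 := by simpa using hsub k j 0 0
    show mul k j (T' k j) = 0
    rw [h0, hz]
  · exact ⟨‖AB'‖, fun k j => norm_entry_le hAB'rep k j⟩
  · -- distance
    have h1 : dist AB AB' = ‖AB - AB'‖ := dist_eq_norm _ _
    rw [h1, ← hD]
    calc ‖D₀‖ ≤ C * ‖B - B'‖ := hD₀n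
      _ = C * dist B B' := by rw [dist_eq_norm]
      _ ≤ C * (ε / (C + 1)) := by
          have := le_of_lt hB'close
          exact mul_le_mul_of_nonneg_left this hC
      _ < ε := by
          rw [div_eq_inv_mul, ← mul_assoc]
          have hlt : C * (C + 1)⁻¹ < 1 := by
            rw [mul_inv_lt_iff₀ (by positivity), one_mul]; linarith
          calc C * (C + 1)⁻¹ * ε < 1 * ε := by
                exact mul_lt_mul_of_pos_right hlt hε
            _ = ε := one_mul ε

end SchurAux

namespace SchurAux

lemma gcc_to_gb {mul : ℕ → ℕ → (H →L[ℂ] H) → (H →L[ℂ] H)} {C : ℝ} (hC : 0 ≤ C)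
    (hzero : ∀ k j, mul k j 0 = 0)
    (h : GCC mul C) : GB mul C := by
  intro S B hSB
  set e : ℝ := (2:ENNReal).toReal with he2
  set V : ℕ → ℕ → (H →L[ℂ] H) := fun k j => mul k j (S k j) with hV
  set Bm : ℕ → (ellTwo H →L[ℂ] ellTwo H) := fun m => (proj m).comp (B.comp (proj m)) with hBm
  have hmatBm : ∀ m k j, mat (Bm m) k j = if k < m ∧ j < m then S k j else 0 := by
    intro m k j
    ext x
    show (proj m (B (proj m (lp.single 2 j x)))) k = _
    rw [proj_single, proj_apply]
    by_cases hj : j < m <;> by_cases hk : k < m <;>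
      simp [hj, hk, hSB j x k]
  have hBmn : ∀ m, ‖Bm m‖ ≤ ‖B‖ := fun m => by
    refine ContinuousLinearMap.opNorm_le_bound _ (norm_nonneg B) (fun x => ?_)
    calc ‖(Bm m) x‖ = ‖proj m (B (proj m x))‖ := rfl
      _ ≤ ‖B (proj m x)‖ := norm_proj_le _ _
      _ ≤ ‖B‖ * ‖proj m x‖ := B.le_opNorm _
      _ ≤ ‖B‖ * ‖x‖ := mul_le_mul_of_nonneg_left (norm_proj_le _ _) (norm_nonneg B)
  have hpoly : ∀ m, PolyMat (mat (Bm m)) := by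
    intro m
    constructor
    · refine ⟨m, fun k j hkj => ?_⟩
      rw [hmatBm]
      refine if_neg (fun hh => ?_)
      rcases abs_cases ((j:ℤ) - (k:ℤ)) with ⟨habs, _⟩ | ⟨habs, _⟩ <;> omega
    · exact ⟨‖Bm m‖, fun k j => norm_mat_le _ k j⟩
  have hcc : ∀ m, ContinuousClass (Bm m) :=
    fun m => subset_closure ⟨mat (Bm m), hpoly m, represents_mat _⟩
  choose A hArep hAcc hAn using fun m => h (mat (Bm m)) (Bm m) (represents_mat _) (hcc m)
  have hAn' : ∀ m, ‖A m‖ ≤ C * ‖B‖ :=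
    fun m => le_trans (hAn m) (mul_le_mul_of_nonneg_left (hBmn m) hC)
  have hArep' : ∀ m (j : ℕ) (x : H) (k : ℕ),
      (A m (lp.single 2 j x)) k = if k < m ∧ j < m then V k j x else 0 := by
    intro m j x k
    have h0 := hArep m j x k
    beta_reduce at h0
    rw [hmatBm] at h0
    rw [h0]
    by_cases hh : k < m ∧ j < m
    · rw [if_pos hh, if_pos hh]
    · rw [if_neg hh, if_neg hh, hzero]; rfl
  set w : ellTwo H → ℕ → H := fun x k => ∑' j, V k j (x j) with hw
  have hsummable : ∀ (x : ellTwo H) (s : Finset ℕ), (∀ j ∉ s, x j = 0) →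
      ∀ k, ∀ c : ℂ, Summable (fun j => c • V k j (x j)) := by
    intro x s hs k c
    refine summable_of_ne_finset_zero (s := s) (fun j hj => ?_)
    rw [hs j hj, map_zero, smul_zero]
  have hwsum : ∀ (x : ellTwo H) (s : Finset ℕ), (∀ j ∉ s, x j = 0) →
      ∀ k, w x k = ∑ j ∈ s, V k j (x j) := by
    intro x s hs k
    refine tsum_eq_sum (fun j hj => ?_)
    rw [hs j hj, map_zero]
  have hAmx : ∀ (x : ellTwo H) (s : Finset ℕ), (∀ j ∉ s, x j = 0) →
      ∀ m, (∀ j ∈ s, j < m) → ∀ k, (A m x) k = if k < m then w x k else 0 := by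
    intro x s hs m hm k
    have hx : x = ∑ j ∈ s, (lp.single 2 j (x j) : ellTwo H) := fin_sum_single hs
    calc (A m x) k = ((∑ j ∈ s, A m (lp.single 2 j (x j))) : ellTwo H) k := by
          rw [← map_sum, ← hx]
      _ = ∑ j ∈ s, (A m (lp.single 2 j (x j))) k := by
          rw [lp.coeFn_sum, Finset.sum_apply]
      _ = ∑ j ∈ s, (if k < m then V k j (x j) else 0) := by
          refine Finset.sum_congr rfl (fun j hj => ?_)
          rw [hArep']
          by_cases hk : k < m
          · rw [if_pos (⟨hk, hm j hj⟩ : k < m ∧ j < m), if_pos hk]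
          · rw [if_neg (fun hh => hk hh.1), if_neg hk]
      _ = if k < m then ∑ j ∈ s, V k j (x j) else 0 := by
          by_cases hk : k < m <;> simp [hk]
      _ = if k < m then w x k else 0 := by rw [hwsum x s hs k]
  have hbound : ∀ (x : ellTwo H) (s : Finset ℕ), (∀ j ∉ s, x j = 0) →
      ∀ F : Finset ℕ, ∑ k ∈ F, ‖w x k‖ ^ e ≤ (C * ‖B‖ * ‖x‖) ^ e := by
    intro x s hs F
    set m : ℕ := ((F ∪ s).sup id) + 1 with hm
    have hms : ∀ j ∈ s, j < m := fun j hj =>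
      Nat.lt_succ_of_le (Finset.le_sup (f := id) (Finset.mem_union_right _ hj))
    have hmF : ∀ k ∈ F, k < m := fun k hk =>
      Nat.lt_succ_of_le (Finset.le_sup (f := id) (Finset.mem_union_left _ hk))
    have h1 : ∑ k ∈ F, ‖w x k‖ ^ e = ∑ k ∈ F, ‖(A m x) k‖ ^ e := by
      refine Finset.sum_congr rfl (fun k hk => ?_)
      rw [hAmx x s hs m hms k, if_pos (hmF k hk)]
    rw [h1]
    refine le_trans (sum_sq_le (A m x) F) ?_
    refine Real.rpow_le_rpow (norm_nonneg _) ?_ (le_of_lt hp2)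
    calc ‖A m x‖ ≤ ‖A m‖ * ‖x‖ := (A m).le_opNorm x
      _ ≤ (C * ‖B‖) * ‖x‖ := mul_le_mul_of_nonneg_right (hAn' m) (norm_nonneg x)
  have hmem : ∀ x : (fin : Submodule ℂ (ellTwo H)), Memℓp (w ↑x) 2 := by
    intro x
    obtain ⟨s, hs⟩ := x.2
    exact memℓp_of_bound _ _ (hbound ↑x s hs)
  set L : (fin : Submodule ℂ (ellTwo H)) →ₗ[ℂ] ellTwo H :=
    { toFun := fun x => (⟨w ↑x, hmem x⟩ : ellTwo H)
      map_add' := by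
        intro x y
        apply lp.ext; funext k
        show w ↑(x + y) k = w ↑x k + w ↑y k
        obtain ⟨sx, hsx⟩ := x.2
        obtain ⟨sy, hsy⟩ := y.2
        have hxy : ∀ j ∉ sx ∪ sy, (↑(x + y) : ellTwo H) j = 0 := by
          intro j hj
          show ((↑x : ellTwo H) + ↑y) j = 0
          rw [lp.coeFn_add, Pi.add_apply,
            hsx j (fun hh => hj (Finset.mem_union_left _ hh)),
            hsy j (fun hh => hj (Finset.mem_union_right _ hh)), add_zero]
        have hsx' : ∀ j ∉ sx ∪ sy, (↑x : ellTwo H) j = 0 :=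
          fun j hj => hsx j (fun hh => hj (Finset.mem_union_left _ hh))
        have hsy' : ∀ j ∉ sx ∪ sy, (↑y : ellTwo H) j = 0 :=
          fun j hj => hsy j (fun hh => hj (Finset.mem_union_right _ hh))
        rw [hwsum _ _ hxy k, hwsum (↑x) _ hsx' k, hwsum (↑y) _ hsy' k,
          ← Finset.sum_add_distrib]
        refine Finset.sum_congr rfl (fun j hj => ?_)
        show V k j ((↑x + ↑y : ellTwo H) j) = V k j ((↑x : ellTwo H) j) + V k j ((↑y : ellTwo H) j)
        rw [lp.coeFn_add, Pi.add_apply, map_add]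
      map_smul' := by
        intro c x
        apply lp.ext; funext k
        show w ↑(c • x) k = c • w ↑x k
        obtain ⟨sx, hsx⟩ := x.2
        have hcx : ∀ j ∉ sx, (↑(c • x) : ellTwo H) j = 0 := by
          intro j hj
          show (c • (↑x : ellTwo H)) j = 0
          rw [lp.coeFn_smul, Pi.smul_apply, hsx j hj, smul_zero]
        rw [hwsum _ _ hcx k, hwsum (↑x) sx hsx k, Finset.smul_sum]
        refine Finset.sum_congr rfl (fun j hj => ?_)
        show V k j ((c • (↑x : ellTwo H)) j) = c • V k j ((↑x : ellTwo H) j)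
        rw [lp.coeFn_smul, Pi.smul_apply, map_smul] } with hL
  have hLb : ∀ x : (fin : Submodule ℂ (ellTwo H)), ‖L x‖ ≤ (C * ‖B‖) * ‖x‖ := by
    intro x
    obtain ⟨s, hs⟩ := x.2
    have : ‖L x‖ ≤ C * ‖B‖ * ‖(↑x : ellTwo H)‖ := by
      refine norm_le_of_bound _ _ (by positivity) (fun F => ?_)
      exact hbound (↑x) s hs F
    exact this
  set Lc : (fin : Submodule ℂ (ellTwo H)) →L[ℂ] ellTwo H :=
    L.mkContinuous (C * ‖B‖) hLb with hLc
  have hee : ∀ x : (fin : Submodule ℂ (ellTwo H)),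
      ‖x‖ ≤ ((1 : NNReal) : ℝ) * ‖(fin : Submodule ℂ (ellTwo H)).subtypeL x‖ := by
    intro x
    rw [NNReal.coe_one, one_mul]
    exact le_of_eq rfl
  have hemb : IsUniformEmbedding ((fin : Submodule ℂ (ellTwo H)).subtypeL) :=
    ContinuousLinearMap.isUniformEmbedding_of_bound
      ((fin : Submodule ℂ (ellTwo H)).subtypeL) hee
  refine ⟨Lc.extend (fin : Submodule ℂ (ellTwo H)).subtypeL, ?_, ?_⟩
  · intro j x k
    have hmemfin := single_mem_fin j x
    have heq := ContinuousLinearMap.extend_eq (f := Lc)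
      denseRange_subtypeL hemb.isUniformInducing
      (⟨lp.single 2 j x, hmemfin⟩ : (fin : Submodule ℂ (ellTwo H)))
    rw [show (fin : Submodule ℂ (ellTwo H)).subtypeL ⟨lp.single 2 j x, hmemfin⟩
        = lp.single 2 j x from rfl] at heq
    rw [heq]
    show w (lp.single 2 j x) k = mul k j (S k j) x
    rw [hw]
    have : (∑' j', V k j' ((lp.single 2 j x : ellTwo H) j')) = V k j x := by
      rw [tsum_eq_single j ?h]
      · rw [lp.single_apply_self (E := fun _ : ℕ => H) 2 j x]
      · intro j' hj'
        rw [lp.single_apply_ne (E := fun _ : ℕ => H) 2 j x hj', map_zero]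
    exact this
  · have h1 : ‖Lc.extend (fin : Submodule ℂ (ellTwo H)).subtypeL‖ ≤ ((1:NNReal) : ℝ) * ‖Lc‖ :=
      ContinuousLinearMap.opNorm_extend_le (f := Lc) denseRange_subtypeL hee
    refine le_trans h1 ?_
    rw [NNReal.coe_one, one_mul]
    exact L.mkContinuous_norm_le (by positivity) hLb

end SchurAux

/-- a matrix is a left (resp. right) Schur multiplier on `B(ℓ²(H))` iff it
multiplies `𝒞(ℓ²(H))` into `𝒞(ℓ²(H))`, with equal multiplier norms. -/
theorem multiplier_iff_CC (T : ℕ → ℕ → (H →L[ℂ] H)) :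
    ((∃ C : ℝ, 0 ≤ C ∧ IsLeftMultBound T C) ↔ (∃ C : ℝ, 0 ≤ C ∧ IsLeftCCBound T C)) ∧
    sInf {C : ℝ | 0 ≤ C ∧ IsLeftMultBound T C} =
      sInf {C : ℝ | 0 ≤ C ∧ IsLeftCCBound T C} ∧
    ((∃ C : ℝ, 0 ≤ C ∧ IsRightMultBound T C) ↔ (∃ C : ℝ, 0 ≤ C ∧ IsRightCCBound T C)) ∧
    sInf {C : ℝ | 0 ≤ C ∧ IsRightMultBound T C} =
      sInf {C : ℝ | 0 ≤ C ∧ IsRightCCBound T C} := by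
  have hL : ∀ C : ℝ, 0 ≤ C → (IsLeftMultBound T C ↔ IsLeftCCBound T C) := by
    intro C hC
    constructor
    · intro h
      have h' : SchurAux.GB (fun k j s => (T k j).comp s) C :=
        fun S B hSB => h S B hSB
      have h'' := SchurAux.gb_to_gcc (mul := fun k j s => (T k j).comp s) hC
        (fun k j a b => ContinuousLinearMap.comp_sub (T k j) a b) h'
      exact fun S B hSB hBcc => h'' S B hSB hBcc
    · intro h
      have h' : SchurAux.GCC (fun k j s => (T k j).comp s) C :=
        fun S B hSB hBcc => h S B hSB hBcc
      have h'' := SchurAux.gcc_to_gb (mul := fun k j s => (T k j).comp s) hC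
        (fun k j => ContinuousLinearMap.comp_zero (T k j)) h'
      exact fun S B hSB => h'' S B hSB
  have hR : ∀ C : ℝ, 0 ≤ C → (IsRightMultBound T C ↔ IsRightCCBound T C) := by
    intro C hC
    constructor
    · intro h
      have h' : SchurAux.GB (fun k j s => s.comp (T k j)) C :=
        fun S B hSB => h S B hSB
      have h'' := SchurAux.gb_to_gcc (mul := fun k j s => s.comp (T k j)) hC
        (fun k j a b => ContinuousLinearMap.sub_comp a b (T k j)) h'
      exact fun S B hSB hBcc => h'' S B hSB hBcc
    · intro h
      have h' : SchurAux.GCC (fun k j s => s.comp (T k j)) C :=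
        fun S B hSB hBcc => h S B hSB hBcc
      have h'' := SchurAux.gcc_to_gb (mul := fun k j s => s.comp (T k j)) hC
        (fun k j => ContinuousLinearMap.zero_comp (T k j)) h'
      exact fun S B hSB => h'' S B hSB
  have hsetL : {C : ℝ | 0 ≤ C ∧ IsLeftMultBound T C} = {C : ℝ | 0 ≤ C ∧ IsLeftCCBound T C} := by
    ext C
    exact and_congr_right (hL C)
  have hsetR : {C : ℝ | 0 ≤ C ∧ IsRightMultBound T C} = {C : ℝ | 0 ≤ C ∧ IsRightCCBound T C} := by
    ext C
    exact and_congr_right (hR C)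
  refine ⟨?_, by rw [hsetL], ?_, by rw [hsetR]⟩
  · exact exists_congr (fun C => and_congr_right (hL C))
  · exact exists_congr (fun C => and_congr_right (hR C))
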